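/- (Replication threshold for a single task, general bimodal): For two machines with bimodal execution time (α1 w.p. p1, α2 w.p. p2 = 1 − p1, 2α1 < α2) and cost J_λ = λE[T] + (1 − λ)E[C], the no-replication policy [0, α2] fails to be optimal among {[0,0],[0,α1],[0,α2]} for λ = 1 (pure completion-time objective) whenever 0 < p1 < 1: both [0,0] and [0,α1] achieve strictly smaller E[T]. -/
import Mathlib


/-- Replication threshold for a single task: for λ = 1 (pure completion-time
objective), the no-replication policy [0, α2] is not optimal among
{[0,0],[0,α1],[0,α2]} whenever 0 < p1 < 1: both [0,0] and [0,α1] achieve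
strictly smaller expected completion time. -/
theorem stmt_19 (α1 α2 p1 p2 : ℝ)
    (hα1 : 0 < α1) (hα : 2 * α1 < α2)
    (hp1 : 0 < p1) (hp1' : p1 < 1) (hp2 : p2 = 1 - p1)
    (ET00 ET01 ET02 : ℝ)
    (hET00 : ET00 = α1 * (1 - p2 ^ 2) + α2 * p2 ^ 2)
    (hET01 : ET01 = α1 * (p2 - p1) * p1 + α2 * p2 ^ 2 + α1 * p1 * p2)
    (hET02 : ET02 = α1 * p1 + α2 * p2) :
    ET00 < ET02 ∧ ET01 < ET02 := by
  subst hp2 hET00 hET01 hET02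
  constructor <;> nlinarith [mul_pos hp1 (sub_pos.mpr hp1'), sq_nonneg p1, sq_nonneg (1-p1), mul_pos hα1 hp1]
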